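/- Let C_h and C_z be n×n Hermitian positive definite complex matrices, let p_a, p_b ≥ 0, set C_a := p_a·C_h + C_z, C_b := p_b·C_h + C_z, Γ := C_z^{−1/2} C_h C_z^{−1/2}, and let C := σ_max(Γ) be the largest eigenvalue of Γ. Then tr{Γ²} / ((p_a·C + 1)(p_b·C + 1)) ≤ tr{C_h C_b⁻¹ C_h C_a⁻¹}. (Lower bound in the paper's inequality (16).) -/

import Mathlib

open Matrix
open scoped ComplexOrder

/-- The square root `Matrix.PosSemidef.sqrt` of Mathlib (Dec 2024), removed since. -/
noncomputable def Matrix.PosSemidef.oldSqrt {n : Type*} [Fintype n] [DecidableEq n]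
    {A : Matrix n n ℂ} (hA : A.PosSemidef) : Matrix n n ℂ :=
  (hA.1.eigenvectorUnitary : Matrix n n ℂ) *
    diagonal ((↑) ∘ (Real.sqrt ∘ hA.1.eigenvalues)) *
    (star (hA.1.eigenvectorUnitary : Matrix n n ℂ))

/-- Lower bound in the paper's inequality (16): with `Ca := p_a·C_h + C_z`,
`Cb := p_b·C_h + C_z`, `Γ := C_z^{−1/2} C_h C_z^{−1/2}` (a Hermitian matrix) and
`C := σ_max(Γ)` its largest eigenvalue,
`tr{Γ²} / ((p_a·C + 1)(p_b·C + 1)) ≤ tr{C_h Cb⁻¹ C_h Ca⁻¹}`. -/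
theorem jeffreys_trace_lower_bound {n : ℕ} (Ch Cz : Matrix (Fin n) (Fin n) ℂ)
    (hh : Ch.PosDef) (hz : Cz.PosDef)
    (pa pb : ℝ) (hpa : 0 ≤ pa) (hpb : 0 ≤ pb)
    (Ca Cb Γ : Matrix (Fin n) (Fin n) ℂ)
    (hCa : Ca = (pa : ℂ) • Ch + Cz) (hCb : Cb = (pb : ℂ) • Ch + Cz)
    (hΓ : Γ = (Matrix.PosSemidef.oldSqrt hz.posSemidef)⁻¹ * Ch * (Matrix.PosSemidef.oldSqrt hz.posSemidef)⁻¹)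
    (hΓherm : Γ.IsHermitian)
    (C : ℝ) (hC : C = ⨆ i, hΓherm.eigenvalues i) :
    (Matrix.trace (Γ * Γ)).re / ((pa * C + 1) * (pb * C + 1)) ≤
      (Matrix.trace (Ch * Cb⁻¹ * Ch * Ca⁻¹)).re := by
  set S : Matrix (Fin n) (Fin n) ℂ := Matrix.PosSemidef.oldSqrt hz.posSemidef with hSdef
  have hSS : S * S = Cz := by
    have hU : (star (hz.posSemidef.1.eigenvectorUnitary : Matrix (Fin n) (Fin n) ℂ)) *
        (hz.posSemidef.1.eigenvectorUnitary : Matrix (Fin n) (Fin n) ℂ) = 1 :=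
      Matrix.mem_unitaryGroup_iff'.mp hz.posSemidef.1.eigenvectorUnitary.2
    conv_rhs => rw [hz.posSemidef.1.spectral_theorem, Unitary.conjStarAlgAut_apply]
    simp only [hSdef, Matrix.PosSemidef.oldSqrt, Matrix.mul_assoc]
    rw [← Matrix.mul_assoc (star _) _, hU, one_mul, ← Matrix.mul_assoc (diagonal _) (diagonal _),
      diagonal_mul_diagonal]
    congr 3
    funext i
    simp only [Function.comp_apply]
    rw [← Complex.ofReal_mul, Real.mul_self_sqrt (hz.posSemidef.eigenvalues_nonneg i)]
    rfl
  have hSherm : S.IsHermitian := by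
    simp only [hSdef, Matrix.PosSemidef.oldSqrt]
    apply Matrix.isHermitian_mul_mul_conjTranspose
    apply Matrix.isHermitian_diagonal_of_self_adjoint
    funext i
    simp [Complex.conj_ofReal]
  have hSdet : IsUnit S.det := by
    have h : IsUnit Cz.det := hz.det_pos.ne'.isUnit
    rw [← hSS, Matrix.det_mul] at h
    exact isUnit_mul_self_iff.mp h
  have hSi1 : S * S⁻¹ = 1 := Matrix.mul_nonsing_inv S hSdet
  have hSi2 : S⁻¹ * S = 1 := Matrix.nonsing_inv_mul S hSdet
  have hc1 : ∀ X : Matrix (Fin n) (Fin n) ℂ, S * (S⁻¹ * X) = X := fun X => by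
    rw [← Matrix.mul_assoc, hSi1, one_mul]
  have hc2 : ∀ X : Matrix (Fin n) (Fin n) ℂ, S⁻¹ * (S * X) = X := fun X => by
    rw [← Matrix.mul_assoc, hSi2, one_mul]
  have hCh' : Ch = S * Γ * S := by
    rw [hΓ]; simp only [Matrix.mul_assoc, hc1, hc2, hSi2, mul_one]
  have hΓpsd : Γ.PosSemidef := by
    have hSiherm : (S⁻¹).IsHermitian := hSherm.inv
    have : Γ = (S⁻¹)ᴴ * Ch * S⁻¹ := by rw [hΓ, hSiherm.eq]
    rw [this]
    exact hh.posSemidef.conjTranspose_mul_mul_same _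
  set U : Matrix (Fin n) (Fin n) ℂ := (hΓherm.eigenvectorUnitary : Matrix (Fin n) (Fin n) ℂ)
    with hUdef
  set d : Fin n → ℝ := hΓherm.eigenvalues with hddef
  have hU1 : star U * U = 1 := by
    have := hΓherm.eigenvectorUnitary.2
    rw [Matrix.mem_unitaryGroup_iff'] at this; exact this
  have hU2 : U * star U = 1 := by
    have := hΓherm.eigenvectorUnitary.2
    rw [Matrix.mem_unitaryGroup_iff] at this; exact this
  have hdnn : ∀ i, 0 ≤ d i := fun i => hΓpsd.eigenvalues_nonneg i
  set M : (Fin n → ℂ) → Matrix (Fin n) (Fin n) ℂ := fun f => U * diagonal f * star U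
    with hMdef
  have hMmul : ∀ f g, M f * M g = M (f * g) := by
    intro f g
    simp only [hMdef, Matrix.mul_assoc]
    rw [← Matrix.mul_assoc (star U) U, hU1, one_mul, ← Matrix.mul_assoc (diagonal f),
      diagonal_mul_diagonal]
    rfl
  have hMone : M 1 = 1 := by
    have h1 : (1 : Fin n → ℂ) = fun _ => 1 := rfl
    simp only [hMdef, h1, diagonal_one, mul_one, hU2]
  have hMtrace : ∀ f, (M f).trace = ∑ i, f i := by
    intro f
    rw [hMdef, trace_mul_cycle, hU1, one_mul, trace_diagonal]
  have hMinv : ∀ f, (∀ i, f i ≠ 0) → (M f)⁻¹ = M f⁻¹ := by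
    intro f hf
    refine Matrix.inv_eq_right_inv ?_
    rw [hMmul]
    rw [show f * f⁻¹ = 1 from funext fun i => mul_inv_cancel₀ (hf i)]
    exact hMone
  set dc : Fin n → ℂ := fun i => (d i : ℂ) with hdcdef
  have hΓM : Γ = M dc := by
    have := hΓherm.spectral_theorem
    rw [this]; rfl
  set fa : Fin n → ℂ := fun i => ((pa * d i + 1 : ℝ) : ℂ) with hfadef
  set fb : Fin n → ℂ := fun i => ((pb * d i + 1 : ℝ) : ℂ) with hfbdef
  have hsmul : ∀ (p : ℝ), (p : ℂ) • Γ + 1 = M (fun i => ((p * d i + 1 : ℝ) : ℂ)) := by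
    intro p
    rw [hΓM, ← hMone]
    simp only [hMdef]
    rw [← Matrix.smul_mul, ← Matrix.mul_smul, ← Matrix.diagonal_smul, ← add_mul, ← mul_add,
      diagonal_add]
    congr 2
    funext i
    push_cast
    simp [smul_eq_mul]
    rfl
  have hCaM : Ca = S * M fa * S := by
    rw [hCa, hCh', ← hSS, ← hsmul pa]
    simp only [Matrix.mul_add, Matrix.add_mul, Matrix.mul_smul, Matrix.smul_mul, Matrix.mul_one]
  have hCbM : Cb = S * M fb * S := by
    rw [hCb, hCh', ← hSS, ← hsmul pb]
    simp only [Matrix.mul_add, Matrix.add_mul, Matrix.mul_smul, Matrix.smul_mul, Matrix.mul_one]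
  have hpos : ∀ (p : ℝ) (i : Fin n), 0 ≤ p → 0 < p * d i + 1 := by
    intro p i hp
    have := hdnn i
    have := mul_nonneg hp this
    linarith
  have hfane : ∀ i, fa i ≠ 0 := by
    intro i
    simp only [hfadef, ne_eq, Complex.ofReal_eq_zero]
    exact (hpos pa i hpa).ne'
  have hfbne : ∀ i, fb i ≠ 0 := by
    intro i
    simp only [hfbdef, ne_eq, Complex.ofReal_eq_zero]
    exact (hpos pb i hpb).ne'
  have hCainv : Ca⁻¹ = S⁻¹ * M fa⁻¹ * S⁻¹ := by
    rw [hCaM, Matrix.mul_inv_rev, Matrix.mul_inv_rev, hMinv fa hfane]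
    simp only [hMdef, Matrix.mul_assoc]
  have hCbinv : Cb⁻¹ = S⁻¹ * M fb⁻¹ * S⁻¹ := by
    rw [hCbM, Matrix.mul_inv_rev, Matrix.mul_inv_rev, hMinv fb hfbne]
    simp only [hMdef, Matrix.mul_assoc]
  have hkey : Ch * Cb⁻¹ * Ch * Ca⁻¹ = S * M (dc * fb⁻¹ * dc * fa⁻¹) * S⁻¹ := by
    rw [hCh', hΓM, hCbinv, hCainv, ← hMmul, ← hMmul, ← hMmul]
    simp only [Matrix.mul_assoc, hc1, hc2]
  have htr1 : (Matrix.trace (Ch * Cb⁻¹ * Ch * Ca⁻¹)) = ∑ i, dc i * (fb i)⁻¹ * dc i * (fa i)⁻¹ := by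
    rw [hkey, trace_mul_cycle, ← Matrix.mul_assoc, hSi2, one_mul, hMtrace]
    simp [Pi.mul_apply, Pi.inv_apply]
  have htr2 : Matrix.trace (Γ * Γ) = ∑ i, (d i : ℂ) * (d i : ℂ) := by
    rw [hΓM, hMmul, hMtrace]
    simp [Pi.mul_apply]
    rfl
  have hdC : ∀ i, d i ≤ C := by
    intro i
    rw [hC]
    exact le_ciSup (Finite.bddAbove_range _) i
  have hC0 : 0 ≤ C := by
    rcases Nat.eq_zero_or_pos n with h0 | h0
    · subst h0; rw [hC]; simp [ciSup_of_empty]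
    · exact le_trans (hdnn ⟨0, h0⟩) (hdC ⟨0, h0⟩)
  rw [htr1, htr2]
  have hre1 : (∑ i, (d i : ℂ) * (d i : ℂ)).re = ∑ i, d i * d i := by
    rw [Complex.re_sum]
    refine Finset.sum_congr rfl fun i _ => ?_
    rw [← Complex.ofReal_mul, Complex.ofReal_re]
  have hre2 : (∑ i, dc i * (fb i)⁻¹ * dc i * (fa i)⁻¹).re
      = ∑ i, d i * (pb * d i + 1)⁻¹ * d i * (pa * d i + 1)⁻¹ := by
    rw [Complex.re_sum]
    refine Finset.sum_congr rfl fun i _ => ?_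
    simp only [hdcdef, hfadef, hfbdef, ← Complex.ofReal_inv, ← Complex.ofReal_mul,
      Complex.ofReal_re]
  rw [hre1, hre2, Finset.sum_div]
  apply Finset.sum_le_sum
  intro i _
  have h1 : 0 < pa * d i + 1 := hpos pa i hpa
  have h2 : 0 < pb * d i + 1 := hpos pb i hpb
  have h3 : 0 < pa * C + 1 := by nlinarith [mul_nonneg hpa hC0]
  have h4 : 0 < pb * C + 1 := by nlinarith [mul_nonneg hpb hC0]
  have hdi := hdnn i
  have hiC := hdC i
  have hle : (pa * d i + 1) * (pb * d i + 1) ≤ (pa * C + 1) * (pb * C + 1) := by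
    have e1 : pa * d i ≤ pa * C := mul_le_mul_of_nonneg_left hiC hpa
    have e2 : pb * d i ≤ pb * C := mul_le_mul_of_nonneg_left hiC hpb
    have e3 : d i * d i ≤ C * C := mul_self_le_mul_self hdi hiC
    have e4 : (pa * pb) * (d i * d i) ≤ (pa * pb) * (C * C) :=
      mul_le_mul_of_nonneg_left e3 (mul_nonneg hpa hpb)
    nlinarith
  have heq : d i * (pb * d i + 1)⁻¹ * d i * (pa * d i + 1)⁻¹
      = d i * d i / ((pa * d i + 1) * (pb * d i + 1)) := by
    rw [div_eq_mul_inv, mul_inv]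
    ring
  rw [heq]
  exact div_le_div_of_nonneg_left (mul_self_nonneg _) (by positivity) hle
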